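/- The function W₁(f, ω) = G (R²/p²)(C₂₀/8)·[e(4−6s²) sin f + s²(Q₀ sin 2ω + 3e sin(f+2ω) + 3 sin(2f+2ω) + e sin(3f+2ω))] with Q₀ = e²(1+2η)/(1+η)², when averaged over the mean anomaly ℓ (i.e., ∫_0^{2π} W₁ dℓ = 0 with dℓ = η³(1+e cos f)^{−2} df), vanishes. -/

import Mathlib

set_option maxHeartbeats 8000000

open Real intervalIntegral

theorem W1_mean_anomaly_average_zero (e : ℝ) (he : e ∈ Set.Ioo (0 : ℝ) 1)
    (η : ℝ) (hη : η = Real.sqrt (1 - e ^ 2))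
    (G R p C20 s ω Q0 : ℝ) (hp : p ≠ 0)
    (hQ0 : Q0 = e ^ 2 * (1 + 2 * η) / (1 + η) ^ 2)
    (W1 : ℝ → ℝ)
    (hW1 : ∀ f, W1 f = G * (R ^ 2 / p ^ 2) * (C20 / 8) *
      (e * (4 - 6 * s ^ 2) * Real.sin f +
        s ^ 2 * (Q0 * Real.sin (2 * ω) + 3 * e * Real.sin (f + 2 * ω) +
          3 * Real.sin (2 * f + 2 * ω) + e * Real.sin (3 * f + 2 * ω)))) :
    ∫ f in (0 : ℝ)..(2 * π), W1 f * η ^ 3 / (1 + e * Real.cos f) ^ 2 = 0 := by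
  obtain ⟨he0, he1⟩ := he
  have he0' : e ≠ 0 := ne_of_gt he0
  have h1e2 : (0:ℝ) < 1 - e ^ 2 := by nlinarith
  have hη2 : η ^ 2 = 1 - e ^ 2 := by rw [hη]; exact Real.sq_sqrt (le_of_lt h1e2)
  have hηpos : 0 < η := by rw [hη]; exact Real.sqrt_pos.mpr h1e2
  have hη1 : (1:ℝ) + η ≠ 0 := by positivity
  have hu : ∀ x : ℝ, 0 < 1 + e * Real.cos x := fun x => by
    nlinarith [Real.neg_one_le_cos x, Real.cos_le_one x]
  have hune : ∀ x : ℝ, 1 + e * Real.cos x ≠ 0 := fun x => ne_of_gt (hu x)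
  have huη : ∀ x : ℝ, 1 + e * Real.cos x + η ≠ 0 := fun x => by
    have := hu x; positivity
  set K : ℝ := G * (R ^ 2 / p ^ 2) * (C20 / 8) * η ^ 3 with hK
  set F : ℝ → ℝ := fun x => K * (
      (4 - 6 * s ^ 2) * (1 + e * Real.cos x)⁻¹
      + s ^ 2 * Real.cos (2 * ω) * (2 * Real.log (1 + e * Real.cos x) / e ^ 2
          - 4 * Real.cos x / e + (3 - (2 + e ^ 2) / e ^ 2) * (1 + e * Real.cos x)⁻¹)
      + s ^ 2 * Real.sin (2 * ω) / e ^ 2 * (4 * e * Real.sin x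
          - 4 * Real.arctan (e * Real.sin x / (1 + e * Real.cos x + η))
          - 2 * e * η * (Real.sin x * (1 + e * Real.cos x)⁻¹))) with hF
  have hD : ∀ x : ℝ, HasDerivAt F (W1 x * η ^ 3 / (1 + e * Real.cos x) ^ 2) x := by
    intro x
    have hcos := Real.hasDerivAt_cos x
    have hsin := Real.hasDerivAt_sin x
    have hs2 : Real.sin x ^ 2 = 1 - Real.cos x ^ 2 := by
      nlinarith [Real.sin_sq_add_cos_sq x]
    have hu' : HasDerivAt (fun x => 1 + e * Real.cos x) (e * -Real.sin x) x :=
      (hcos.const_mul e).const_add 1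
    have hinv : HasDerivAt (fun x => (1 + e * Real.cos x)⁻¹)
        (e * Real.sin x / (1 + e * Real.cos x) ^ 2) x := by
      have h := hu'.inv (hune x)
      refine h.congr_deriv (Eq.symm ?_)
      ring
    have hlog : HasDerivAt (fun x => Real.log (1 + e * Real.cos x))
        ((e * -Real.sin x) / (1 + e * Real.cos x)) x := hu'.log (hune x)
    have hgC : HasDerivAt (fun x => 2 * Real.log (1 + e * Real.cos x) / e ^ 2
          - 4 * Real.cos x / e + (3 - (2 + e ^ 2) / e ^ 2) * (1 + e * Real.cos x)⁻¹)
        (Real.sin x * (4 * (1 + e * Real.cos x) ^ 2 - 2 * (1 + e * Real.cos x)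
            + 2 * e ^ 2 - 2) / (e * (1 + e * Real.cos x) ^ 2)) x := by
      have h := (((hlog.const_mul 2).div_const (e ^ 2)).sub
          ((hcos.const_mul 4).div_const e)).add (hinv.const_mul (3 - (2 + e ^ 2) / e ^ 2))
      refine h.congr_deriv (Eq.symm ?_)
      field_simp [hune x, he0']
      ring
    have hsi : HasDerivAt (fun x => Real.sin x * (1 + e * Real.cos x)⁻¹)
        (Real.cos x * (1 + e * Real.cos x)⁻¹ +
          Real.sin x * (e * Real.sin x / (1 + e * Real.cos x) ^ 2)) x :=
      hsin.mul hinv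
    have hv : HasDerivAt (fun x => e * Real.sin x / (1 + e * Real.cos x + η))
        ((e * Real.cos x * (1 + e * Real.cos x + η) - e * Real.sin x * (e * -Real.sin x))
          / (1 + e * Real.cos x + η) ^ 2) x :=
      (hsin.const_mul e).div (hu'.add_const η) (huη x)
    have hat : HasDerivAt (fun x => Real.arctan (e * Real.sin x / (1 + e * Real.cos x + η)))
        ((1 + e * Real.cos x - η) / (2 * (1 + e * Real.cos x))) x := by
      have hq : (1 + e * Real.cos x + η) ^ 2 + (e * Real.sin x) ^ 2 ≠ 0 := by
        have := hu x; positivity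
      have h := (Real.hasDerivAt_arctan (e * Real.sin x / (1 + e * Real.cos x + η))).comp x hv
      refine h.congr_deriv (Eq.symm ?_)
      field_simp [hune x, huη x, hq]
      rw [eq_div_iff (by have := hu x; positivity)]
      linear_combination (-(1+e*Real.cos x+η)) * hη2 + (-(1+e*Real.cos x+η)*e^2) * hs2
    have hgS : HasDerivAt (fun x => 4 * e * Real.sin x
          - 4 * Real.arctan (e * Real.sin x / (1 + e * Real.cos x + η))
          - 2 * e * η * (Real.sin x * (1 + e * Real.cos x)⁻¹))
        (4 * e * Real.cos x - 2 + 2 * η ^ 3 / (1 + e * Real.cos x) ^ 2) x := by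
      have h := ((hsin.const_mul (4 * e)).sub (hat.const_mul 4)).sub (hsi.const_mul (2 * e * η))
      refine h.congr_deriv (Eq.symm ?_)
      field_simp [hune x]
      linear_combination (4*η) * hη2 + (4*e^2*η) * hs2
    have hbig : HasDerivAt F (K * (
        (4 - 6 * s ^ 2) * (e * Real.sin x / (1 + e * Real.cos x) ^ 2)
        + s ^ 2 * Real.cos (2 * ω) * (Real.sin x * (4 * (1 + e * Real.cos x) ^ 2
            - 2 * (1 + e * Real.cos x) + 2 * e ^ 2 - 2) / (e * (1 + e * Real.cos x) ^ 2))
        + s ^ 2 * Real.sin (2 * ω) / e ^ 2 *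
            (4 * e * Real.cos x - 2 + 2 * η ^ 3 / (1 + e * Real.cos x) ^ 2))) x :=
      HasDerivAt.const_mul K (((hinv.const_mul (4 - 6 * s ^ 2)).add
        (hgC.const_mul (s ^ 2 * Real.cos (2 * ω)))).add
        (hgS.const_mul (s ^ 2 * Real.sin (2 * ω) / e ^ 2)))
    have h : (e * (4 - 6 * s ^ 2) * Real.sin x +
        s ^ 2 * (Q0 * Real.sin (2 * ω) + 3 * e * Real.sin (x + 2 * ω) +
          3 * Real.sin (2 * x + 2 * ω) + e * Real.sin (3 * x + 2 * ω))) /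
          (1 + e * Real.cos x) ^ 2 =
        (4 - 6 * s ^ 2) * (e * Real.sin x / (1 + e * Real.cos x) ^ 2)
        + s ^ 2 * Real.cos (2 * ω) * (Real.sin x * (4 * (1 + e * Real.cos x) ^ 2
            - 2 * (1 + e * Real.cos x) + 2 * e ^ 2 - 2) / (e * (1 + e * Real.cos x) ^ 2))
        + s ^ 2 * Real.sin (2 * ω) / e ^ 2 *
            (4 * e * Real.cos x - 2 + 2 * η ^ 3 / (1 + e * Real.cos x) ^ 2) := by
      rw [hQ0,
        show (2 * x + 2 * ω) = (x + (x + 2 * ω)) by ring,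
        show (3 * x + 2 * ω) = (x + (x + (x + 2 * ω))) by ring,
        Real.sin_add x (x + (x + 2 * ω)),
        Real.sin_add x (x + 2 * ω), Real.cos_add x (x + 2 * ω),
        Real.sin_add x (2 * ω), Real.cos_add x (2 * ω)]
      field_simp [hune x, he0', hη1]
      linear_combination (-e^3*s^2*Real.cos (2 * ω)*(1+η)^2*Real.sin x - 3*e^2*s^2*Real.sin (2 * ω)*(1+η)^2*(1+e*Real.cos x)) * hs2 + (s^2*Real.sin (2 * ω)*((e^2+1-η^2)*(1+2*η) - 3*(1+η)^2)) * hη2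
    convert hbig using 1
    rw [hW1, hK]
    rw [show G * (R ^ 2 / p ^ 2) * (C20 / 8) * (e * (4 - 6 * s ^ 2) * Real.sin x +
        s ^ 2 * (Q0 * Real.sin (2 * ω) + 3 * e * Real.sin (x + 2 * ω) +
          3 * Real.sin (2 * x + 2 * ω) + e * Real.sin (3 * x + 2 * ω))) * η ^ 3 /
          (1 + e * Real.cos x) ^ 2
      = G * (R ^ 2 / p ^ 2) * (C20 / 8) * η ^ 3 * ((e * (4 - 6 * s ^ 2) * Real.sin x +
        s ^ 2 * (Q0 * Real.sin (2 * ω) + 3 * e * Real.sin (x + 2 * ω) +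
          3 * Real.sin (2 * x + 2 * ω) + e * Real.sin (3 * x + 2 * ω))) /
          (1 + e * Real.cos x) ^ 2) from by ring, h]
  have hcont : Continuous fun x => W1 x * η ^ 3 / (1 + e * Real.cos x) ^ 2 := by
    have : (fun x => W1 x * η ^ 3 / (1 + e * Real.cos x) ^ 2) =
        (fun x => (G * (R ^ 2 / p ^ 2) * (C20 / 8) *
      (e * (4 - 6 * s ^ 2) * Real.sin x +
        s ^ 2 * (Q0 * Real.sin (2 * ω) + 3 * e * Real.sin (x + 2 * ω) +
          3 * Real.sin (2 * x + 2 * ω) + e * Real.sin (3 * x + 2 * ω)))) * η ^ 3 /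
          (1 + e * Real.cos x) ^ 2) := by
      funext x; rw [hW1]
    rw [this]
    exact Continuous.div (by fun_prop) (by fun_prop)
      (fun x => pow_ne_zero 2 (hune x))
  rw [integral_eq_sub_of_hasDerivAt (fun x _ => hD x) (hcont.intervalIntegrable 0 (2 * π))]
  have : F (2 * π) = F 0 := by
    rw [hF]
    norm_num [Real.sin_two_pi, Real.cos_two_pi]
  rw [this, sub_self]
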